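/- arXiv:0811.0256 — 3 statements merged into one kernel-verified Lean document; each statement's English description precedes it below -/
import Mathlib

section
/- Let R ∈ ℂ[[z]] and m ≥ 1, n, k natural numbers with n < k. With Ψ_{m,n} the diagonal-extraction map on ℂ[[t,z]], one has Ψ_{m,n}( R / (1 - t^m z^k) ) = R(0), i.e., only the constant term survives. -/
open MvPowerSeries Finsupp

/-- Let `R = Σ_j f_j z^j ∈ ℂ[[z]]`, `m ≥ 1` and `n < k`.  If `G = R / (1 - t^m z^k)`
in `ℂ[[t,z]]`, then the diagonal-extraction map `Ψ_{m,n}` (sending `t^{sm} z^{sn} ↦ T^s`)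
gives `Ψ_{m,n}(G) = R(0)`: only the constant term survives. -/
theorem stmt4 (m n k : ℕ) (hm : 1 ≤ m) (hk : n < k) (f : ℕ → ℂ)
    (G : MvPowerSeries (Fin 2) ℂ)
    (hG : ∀ d : Fin 2 →₀ ℕ,
      MvPowerSeries.coeff d
          (G * (1 - (MvPowerSeries.X 0) ^ m * (MvPowerSeries.X 1) ^ k)) =
        if d 0 = 0 then f (d 1) else 0) :
    ∀ s : ℕ,
      MvPowerSeries.coeff (Finsupp.single (0 : Fin 2) (s * m) + Finsupp.single 1 (s * n)) G =
        if s = 0 then f 0 else 0 := by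
  classical
  set e : Fin 2 →₀ ℕ := Finsupp.single 0 m + Finsupp.single 1 k with he
  have he0 : e 0 = m := by simp [he]
  have he1 : e 1 = k := by simp [he]
  have hu : (MvPowerSeries.X 0 : MvPowerSeries (Fin 2) ℂ) ^ m * (MvPowerSeries.X 1) ^ k
      = MvPowerSeries.monomial e 1 := by
    rw [MvPowerSeries.X_pow_eq, MvPowerSeries.X_pow_eq, MvPowerSeries.monomial_mul_monomial,
      one_mul]
  have key : ∀ d : Fin 2 →₀ ℕ, MvPowerSeries.coeff d G =
      (if d 0 = 0 then f (d 1) else 0) +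
      (if e ≤ d then MvPowerSeries.coeff (d - e) G else 0) := by
    intro d
    have h := hG d
    rw [mul_sub, mul_one, map_sub, hu, MvPowerSeries.coeff_mul_monomial] at h
    split_ifs at h ⊢ <;> linear_combination h
  have claim : ∀ a b : ℕ, b < a * k →
      MvPowerSeries.coeff (Finsupp.single 0 (a * m) + Finsupp.single 1 b) G = 0 := by
    intro a
    induction a with
    | zero => intro b hb; omega
    | succ a ih =>
      intro b hb
      set d : Fin 2 →₀ ℕ := Finsupp.single 0 ((a + 1) * m) + Finsupp.single 1 b with hd
      have hd0 : d 0 = (a + 1) * m := by simp [hd]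
      have hd1 : d 1 = b := by simp [hd]
      have hdne : d 0 ≠ 0 := by rw [hd0]; positivity
      rw [key d, if_neg hdne, zero_add]
      by_cases hbk : k ≤ b
      · have hd' : d = e + (Finsupp.single 0 (a * m) + Finsupp.single 1 (b - k)) := by
          rw [he, hd]
          have h1 : Finsupp.single (0 : Fin 2) ((a + 1) * m)
              = Finsupp.single 0 m + Finsupp.single 0 (a * m) := by
            rw [← Finsupp.single_add]; congr 1; ring
          have h2 : Finsupp.single (1 : Fin 2) b
              = Finsupp.single 1 k + Finsupp.single 1 (b - k) := by
            rw [← Finsupp.single_add]; congr 1; omega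
          rw [h1, h2]; abel
        have hle : e ≤ d := hd' ▸ le_add_right le_rfl
        rw [if_pos hle, hd', add_tsub_cancel_left]
        have hak : (a + 1) * k = a * k + k := by ring
        exact ih (b - k) (by omega)
      · have hnle : ¬ e ≤ d := by
          rw [Finsupp.le_def]
          push_neg
          exact ⟨1, by rw [he1, hd1]; omega⟩
        rw [if_neg hnle]
  intro s
  rcases Nat.eq_zero_or_pos s with hs | hs
  · subst hs
    simp only [zero_mul, Finsupp.single_zero, add_zero, if_pos rfl]
    have h := key 0
    have hnle : ¬ e ≤ (0 : Fin 2 →₀ ℕ) := by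
      rw [Finsupp.le_def]
      push_neg
      exact ⟨0, by rw [he0]; exact Nat.lt_of_lt_of_le (by simp) hm⟩
    rw [if_neg hnle] at h
    simpa using h
  · rw [if_neg (by omega)]
    exact claim s (s * n) (by nlinarith)
end

section
/- The Poincaré series of the algebra of invariants of the binary form of degree d satisfies Springer's formula: P_{2,d}(T) = Σ_{0 ≤ k < d/2} φ_{d-2k}( (-1)^k z^{k(k+1)} (1-z²) / ( (z²;z²)_k (z²;z²)_{d-k} ) ), where φ_n is the linear operator on ℂ[[z]] extracting coefficients at powers divisible by n (and replacing z^n by z), assuming the Sylvester–Cayley input that dim(I_{2,d})_n equals the coefficient of (t z^d)^n in f_d(t,z²) = (1-z²)/∏_{j=0}^{d}(1 - t z^{2j}). -/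
open Finset

/-- The coefficient-extraction operator `φ_m : ℂ[[z]] → ℂ[[T]]`,
`φ_m(Σ a_j z^j) = Σ_s a_{ms} T^s`. -/
noncomputable def phiOp (m : ℕ) (A : PowerSeries ℂ) : PowerSeries ℂ :=
  PowerSeries.mk fun s => PowerSeries.coeff (m * s) A

namespace SpringerAux
open PowerSeries


lemma fin2_decomp (e : Fin 2 →₀ ℕ) : e = Finsupp.single 0 (e 0) + Finsupp.single 1 (e 1) := by
  ext x
  fin_cases x <;> simp [Finsupp.single_apply]

/-- The embedding of one-variable power series into two-variable ones, `Y ↦ X 1`. -/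
noncomputable def embFun (f : PowerSeries ℂ) : MvPowerSeries (Fin 2) ℂ :=
  fun e => if e 0 = 0 then PowerSeries.coeff (e 1) f else 0

lemma coeff_embFun (f : PowerSeries ℂ) (e : Fin 2 →₀ ℕ) :
    MvPowerSeries.coeff e (embFun f) = if e 0 = 0 then PowerSeries.coeff (e 1) f else 0 :=
  rfl

lemma embFun_one : embFun 1 = 1 := by
  ext e
  rw [coeff_embFun, MvPowerSeries.coeff_one]
  by_cases h0 : e 0 = 0
  · by_cases h1 : e 1 = 0
    · have : e = 0 := by rw [fin2_decomp e, h0, h1]; simp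
      simp [h0, h1, this, PowerSeries.coeff_one]
    · have : e ≠ 0 := fun h => h1 (by simp [h])
      simp [h0, h1, this, PowerSeries.coeff_one]
  · have : e ≠ 0 := fun h => h0 (by simp [h])
    simp [h0, this]

lemma embFun_mul (f g : PowerSeries ℂ) : embFun (f * g) = embFun f * embFun g := by
  ext e
  rw [coeff_embFun, MvPowerSeries.coeff_mul]
  by_cases h0 : e 0 = 0
  · simp only [h0, if_true]
    rw [PowerSeries.coeff_mul]
    refine Finset.sum_nbij' (i := fun p => (Finsupp.single 1 p.1, Finsupp.single 1 p.2))
      (j := fun p => (p.1 1, p.2 1)) ?_ ?_ ?_ ?_ ?_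
    · intro p hp
      rw [Finset.HasAntidiagonal.mem_antidiagonal] at hp ⊢
      rw [← Finsupp.single_add, hp, fin2_decomp e, h0]
      simp
    · intro p hp
      rw [Finset.HasAntidiagonal.mem_antidiagonal] at hp ⊢
      have := congrArg (fun f : Fin 2 →₀ ℕ => f 1) hp
      simpa using this
    · intro p hp; simp
    · intro p hp
      rw [Finset.HasAntidiagonal.mem_antidiagonal] at hp
      have h1 : p.1 0 = 0 ∧ p.2 0 = 0 := by
        have := congrArg (fun f : Fin 2 →₀ ℕ => f 0) hp
        simp [h0] at this
        omega
      ext : 1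
      · rw [fin2_decomp p.1, h1.1]; simp
      · rw [fin2_decomp p.2, h1.2]; simp
    · intro p hp
      rw [coeff_embFun, coeff_embFun]
      simp [Finsupp.single_apply]
  · simp only [h0, if_false]
    refine (Finset.sum_eq_zero ?_).symm
    intro p hp
    rw [Finset.HasAntidiagonal.mem_antidiagonal] at hp
    have h1 : p.1 0 ≠ 0 ∨ p.2 0 ≠ 0 := by
      by_contra hc
      push_neg at hc
      have := congrArg (fun f : Fin 2 →₀ ℕ => f 0) hp
      simp [hc.1, hc.2] at this
      exact h0 this.symm
    rcases h1 with h | h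
    · rw [coeff_embFun, if_neg h, zero_mul]
    · rw [coeff_embFun (f := g), if_neg h, mul_zero]

noncomputable def emb : PowerSeries ℂ →+* MvPowerSeries (Fin 2) ℂ where
  toFun := embFun
  map_one' := embFun_one
  map_mul' := embFun_mul
  map_zero' := by
    ext e
    rw [coeff_embFun]
    simp
  map_add' := by
    intro f g
    ext e
    show MvPowerSeries.coeff e (embFun (f+g)) = MvPowerSeries.coeff e (embFun f + embFun g)
    rw [map_add, coeff_embFun, coeff_embFun, coeff_embFun, map_add]
    split <;> simp

lemma emb_X_pow (a : ℕ) : emb ((PowerSeries.X : PowerSeries ℂ) ^ a)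
    = (MvPowerSeries.X 1 : MvPowerSeries (Fin 2) ℂ) ^ a := by
  ext e
  rw [show (emb ((PowerSeries.X : PowerSeries ℂ) ^ a)) = embFun (PowerSeries.X ^ a) from rfl,
    coeff_embFun, MvPowerSeries.coeff_X_pow, PowerSeries.coeff_X_pow]
  by_cases h0 : e 0 = 0
  · by_cases h1 : e 1 = a
    · have : e = Finsupp.single 1 a := by rw [fin2_decomp e, h0, h1]; simp
      simp [h0, h1, this]
    · have : e ≠ Finsupp.single 1 a := by
        intro h; exact h1 (by rw [h]; simp)
      simp [h0, h1, this]
  · have : e ≠ Finsupp.single 1 a := by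
      intro h; apply h0; rw [h]; simp [Finsupp.single_apply]
    simp [h0, this]



lemma fin2_decomp' (e : Fin 2 →₀ ℕ) : e = Finsupp.single 0 (e 0) + Finsupp.single 1 (e 1) := by
  ext x; fin_cases x <;> simp [Finsupp.single_apply]

noncomputable def Tk (k : ℕ) : MvPowerSeries (Fin 2) ℂ :=
  fun e => if e 1 = 2 * k * (e 0) then 1 else 0

lemma coeff_Tk (k : ℕ) (e : Fin 2 →₀ ℕ) :
    MvPowerSeries.coeff e (Tk k) = if e 1 = 2 * k * (e 0) then 1 else 0 := rfl

lemma geom (k : ℕ) :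
    (1 - MvPowerSeries.X 0 * (MvPowerSeries.X 1 : MvPowerSeries (Fin 2) ℂ) ^ (2 * k)) * Tk k
      = 1 := by
  have hmon : (MvPowerSeries.X 0 * (MvPowerSeries.X 1) ^ (2*k) : MvPowerSeries (Fin 2) ℂ)
      = MvPowerSeries.monomial (Finsupp.single 0 1 + Finsupp.single 1 (2*k)) 1 := by
    rw [MvPowerSeries.X_pow_eq, MvPowerSeries.X, MvPowerSeries.monomial_mul_monomial, one_mul]
  set b : Fin 2 →₀ ℕ := Finsupp.single 0 1 + Finsupp.single 1 (2*k) with hb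
  ext e
  rw [sub_mul, one_mul, map_sub, hmon, MvPowerSeries.coeff_monomial_mul, MvPowerSeries.coeff_one,
    coeff_Tk]
  have hb0 : b 0 = 1 := by rw [hb]; simp [Finsupp.single_apply]
  have hb1 : b 1 = 2*k := by rw [hb]; simp [Finsupp.single_apply]
  have hble : b ≤ e ↔ (1 ≤ e 0 ∧ 2*k ≤ e 1) := by
    rw [Finsupp.le_def]
    constructor
    · intro h
      exact ⟨by simpa [hb0] using h 0, by simpa [hb1] using h 1⟩
    · intro h s
      fin_cases s
      · simpa [hb0] using h.1
      · simpa [hb1] using h.2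
  have he0 : e = 0 ↔ (e 0 = 0 ∧ e 1 = 0) := by
    constructor
    · intro h; simp [h]
    · intro h; rw [fin2_decomp' e, h.1, h.2]; simp
  by_cases hbe : b ≤ e
  · rw [if_pos hbe, one_mul, coeff_Tk]
    have h0 : (e - b) 0 = e 0 - 1 := by rw [Finsupp.tsub_apply, hb0]
    have h1 : (e - b) 1 = e 1 - 2*k := by rw [Finsupp.tsub_apply, hb1]
    rw [h0, h1]
    rw [hble] at hbe
    have hne : e ≠ 0 := by rw [Ne, he0]; omega
    rw [if_neg hne]
    obtain ⟨n', hn'⟩ : ∃ n', e 0 = n' + 1 := ⟨e 0 - 1, by omega⟩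
    rw [hn']
    have hred : n' + 1 - 1 = n' := rfl
    rw [hred]
    have hexp : 2*k*(n'+1) = 2*k*n' + 2*k := by ring
    rw [hexp]
    have h2 : 2*k ≤ e 1 := hbe.2
    by_cases hm : e 1 = 2*k*n' + 2*k
    · rw [if_pos hm, if_pos (by omega), sub_self]
    · rw [if_neg hm, if_neg (by omega), sub_self]
  · rw [if_neg hbe, sub_zero]
    rw [hble] at hbe
    by_cases hz : e = 0
    · rw [if_pos hz, if_pos (by rw [hz]; simp)]
    · rw [if_neg hz, if_neg ?_]
      have hz' := fun h => hz (he0.mpr h)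
      intro hm
      -- e 1 = 2k e 0, ¬(1 ≤ e0 ∧ 2k ≤ e1), ¬(e0=0∧e1=0)
      rcases Nat.eq_zero_or_pos (e 0) with h|h
      · exact hz' ⟨h, by rw [hm, h, mul_zero]⟩
      · exact hbe ⟨h, by rw [hm]; exact Nat.le_mul_of_pos_right _ h⟩

lemma coeff_embFun_mul_Tk (g : PowerSeries ℂ) (k n m : ℕ) :
    MvPowerSeries.coeff (Finsupp.single 0 n + Finsupp.single 1 m) (embFun g * Tk k)
      = if 2 * k * n ≤ m then PowerSeries.coeff (m - 2 * k * n) g else 0 := by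
  rw [MvPowerSeries.coeff_mul]
  have hp0 : ∀ a b : ℕ, ((Finsupp.single (0:Fin 2) a + Finsupp.single 1 b) : Fin 2 →₀ ℕ) 0 = a := by
    intro a b; simp [Finsupp.single_apply]
  have hp1 : ∀ a b : ℕ, ((Finsupp.single (0:Fin 2) a + Finsupp.single 1 b) : Fin 2 →₀ ℕ) 1 = b := by
    intro a b; simp [Finsupp.single_apply]
  by_cases hle : 2 * k * n ≤ m
  · rw [if_pos hle]
    have hmem : ((Finsupp.single 1 (m - 2*k*n), Finsupp.single 0 n + Finsupp.single 1 (2*k*n)) :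
        (Fin 2 →₀ ℕ) × (Fin 2 →₀ ℕ)) ∈ Finset.HasAntidiagonal.antidiagonal
          (Finsupp.single (0 : Fin 2) n + Finsupp.single 1 m) := by
      rw [Finset.HasAntidiagonal.mem_antidiagonal]
      ext x
      fin_cases x <;> simp [Finsupp.single_apply] <;> omega
    rw [Finset.sum_eq_single_of_mem _ hmem ?_]
    · rw [coeff_embFun, coeff_Tk]
      simp [Finsupp.single_apply, hp0, hp1]
    · intro p hp hne
      rw [Finset.HasAntidiagonal.mem_antidiagonal] at hp
      have h0 := congrArg (fun f : Fin 2 →₀ ℕ => f 0) hp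
      have h1 := congrArg (fun f : Fin 2 →₀ ℕ => f 1) hp
      simp only [Finsupp.add_apply, hp0, hp1] at h0 h1
      by_cases c1 : p.1 0 = 0
      · by_cases c2 : p.2 1 = 2 * k * (p.2 0)
        · exfalso
          apply hne
          have hq0 : p.2 0 = n := by omega
          have hq1 : p.2 1 = 2*k*n := by rw [c2, hq0]
          have hp11 : p.1 1 = m - 2*k*n := by omega
          ext : 1
          · rw [fin2_decomp' p.1, c1, hp11]; simp
          · rw [fin2_decomp' p.2, hq0, hq1]
        · rw [coeff_Tk, if_neg c2, mul_zero]
      · rw [coeff_embFun, if_neg c1, zero_mul]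
  · rw [if_neg hle]
    refine Finset.sum_eq_zero ?_
    intro p hp
    rw [Finset.HasAntidiagonal.mem_antidiagonal] at hp
    have h0 := congrArg (fun f : Fin 2 →₀ ℕ => f 0) hp
    have h1 := congrArg (fun f : Fin 2 →₀ ℕ => f 1) hp
    simp only [Finsupp.add_apply, hp0, hp1] at h0 h1
    by_cases c1 : p.1 0 = 0
    · by_cases c2 : p.2 1 = 2 * k * (p.2 0)
      · exfalso
        have hq0 : p.2 0 = n := by omega
        rw [hq0] at c2
        omega
      · rw [coeff_Tk, if_neg c2, mul_zero]
    · rw [coeff_embFun, if_neg c1, zero_mul]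


noncomputable def uu (m : ℕ) : PowerSeries ℂ :=
  ∏ j ∈ range m, (1 - (PowerSeries.X : PowerSeries ℂ) ^ (2 * (j + 1)))

noncomputable def cc (d k : ℕ) : PowerSeries ℂ :=
  (-1 : PowerSeries ℂ) ^ k * (PowerSeries.X : PowerSeries ℂ) ^ (k * (k + 1)) *
    (uu k * uu (d - k))⁻¹

lemma constCoeff_uu (m : ℕ) : PowerSeries.constantCoeff (uu m) = 1 := by
  rw [uu, map_prod]
  refine Finset.prod_eq_one ?_
  intro j _
  rw [map_sub, map_one, map_pow, PowerSeries.constantCoeff_X, zero_pow (by omega), sub_zero]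

lemma uu_mul_ne (d k : ℕ) : PowerSeries.constantCoeff (uu k * uu (d - k)) ≠ 0 := by
  rw [map_mul, constCoeff_uu, constCoeff_uu, one_mul]
  exact one_ne_zero

-- The Laurent series field
local notation "K" => LaurentSeries ℂ
noncomputable abbrev lphi : PowerSeries ℂ →+* LaurentSeries ℂ := HahnSeries.ofPowerSeries ℤ ℂ

lemma lphi_inj : Function.Injective lphi := HahnSeries.ofPowerSeries_injective

noncomputable def yy : K := lphi PowerSeries.X
noncomputable def ww : K := yy ^ 2

lemma ww_ne : (ww : K) ≠ 0 := by
  rw [ww, yy]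
  apply pow_ne_zero
  intro h
  have := lphi_inj (h.trans (map_zero lphi).symm)
  exact PowerSeries.X_ne_zero this

lemma ww_pow_ne_one {m : ℕ} (hm : 0 < m) : (ww : K) ^ m ≠ 1 := by
  rw [ww, yy, ← pow_mul, ← map_pow, ← map_one lphi]
  intro h
  have := lphi_inj h
  have h0 := congrArg (PowerSeries.constantCoeff) this
  rw [map_pow, PowerSeries.constantCoeff_X, map_one, zero_pow (by omega)] at h0
  exact zero_ne_one h0

lemma lphi_uu (m : ℕ) : lphi (uu m) = ∏ j ∈ range m, (1 - (ww : K) ^ (j + 1)) := by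
  rw [uu, map_prod]
  refine Finset.prod_congr rfl ?_
  intro j _
  rw [map_sub, map_one, map_pow, ww, yy, ← pow_mul, mul_comm 2 (j+1)]

lemma lphi_uu_ne (m : ℕ) : lphi (uu m) ≠ 0 := by
  intro h
  have := lphi_inj (h.trans (map_zero lphi).symm)
  have h0 := congrArg (PowerSeries.constantCoeff) this
  rw [constCoeff_uu, map_zero] at h0
  exact one_ne_zero h0

lemma lphi_cc (d k : ℕ) :
    lphi (cc d k) = (-1 : K) ^ k * yy ^ (k * (k + 1)) * (lphi (uu k) * lphi (uu (d - k)))⁻¹ := by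
  rw [cc, map_mul, map_mul, map_pow, map_neg, map_one, map_pow,
    show lphi PowerSeries.X = yy from rfl]
  congr 1
  · -- lphi of inverse
    have h1 : (uu k * uu (d - k)) * (uu k * uu (d-k))⁻¹ = 1 :=
      PowerSeries.mul_inv_cancel _ (uu_mul_ne d k)
    have h2 := congrArg lphi h1
    rw [map_mul, map_one, map_mul] at h2
    exact eq_inv_of_mul_eq_one_right (by rw [mul_comm] at h2; linear_combination h2)

/-- The Lagrange identity in `Polynomial (PowerSeries ℂ)`. -/
lemma lagrange_id (d : ℕ) :
    (∑ k ∈ range (d + 1), Polynomial.C (cc d k) *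
      ∏ j ∈ (range (d + 1)).erase k,
        (1 - Polynomial.C ((PowerSeries.X : PowerSeries ℂ) ^ (2 * j)) * Polynomial.X))
      = 1 := by
  classical
  set v : K := ww⁻¹ with hv
  have hvw : ∀ a : ℕ, (v : K) ^ a * ww ^ a = 1 := by
    intro a
    rw [← mul_pow, hv, inv_mul_cancel₀ ww_ne, one_pow]
  have hwinj : ∀ a b : ℕ, a < b → (ww : K) ^ a ≠ ww ^ b := by
    intro a b hlt h
    have h2 : (ww : K) ^ (b - a) = 1 := by
      rw [pow_sub₀ _ ww_ne (le_of_lt hlt), ← h, mul_inv_cancel₀ (pow_ne_zero _ ww_ne)]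
    exact ww_pow_ne_one (by omega) h2
  have hvinj : ∀ a b : ℕ, a ≠ b → (v : K) ^ a ≠ v ^ b := by
    intro a b hne h
    have h2 : (ww : K) ^ a = ww ^ b := by
      have := congrArg (·⁻¹) h
      simpa [hv, inv_pow] using this
    rcases Nat.lt_or_ge a b with hlt | hge
    · exact hwinj a b hlt h2
    · exact hwinj b a (by omega) h2.symm
  set F : Polynomial K := ∑ k ∈ range (d + 1), Polynomial.C (lphi (cc d k)) *
      ∏ j ∈ (range (d + 1)).erase k, (1 - Polynomial.C ((ww : K) ^ j) * Polynomial.X) with hF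
  have hmap : Polynomial.map (lphi : PowerSeries ℂ →+* K)
      (∑ k ∈ range (d + 1), Polynomial.C (cc d k) *
        ∏ j ∈ (range (d + 1)).erase k,
          (1 - Polynomial.C ((PowerSeries.X : PowerSeries ℂ) ^ (2 * j)) * Polynomial.X)) = F := by
    rw [hF, Polynomial.map_sum]
    refine Finset.sum_congr rfl ?_
    intro k _
    rw [Polynomial.map_mul, Polynomial.map_C, Polynomial.map_prod]
    congr 1
    refine Finset.prod_congr rfl ?_
    intro j _
    rw [Polynomial.map_sub, Polynomial.map_one, Polynomial.map_mul, Polynomial.map_C,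
      Polynomial.map_X, map_pow]
    congr 3
    rw [show lphi PowerSeries.X = yy from rfl, ww, ← pow_mul, mul_comm 2 j]
  have heval : ∀ i ∈ range (d + 1), Polynomial.eval ((v : K) ^ i) F = 1 := by
    intro i hi
    rw [hF, Polynomial.eval_finset_sum]
    have hother : ∀ k ∈ range (d+1), k ≠ i → Polynomial.eval ((v:K)^i)
        (Polynomial.C (lphi (cc d k)) *
          ∏ j ∈ (range (d + 1)).erase k, (1 - Polynomial.C ((ww : K) ^ j) * Polynomial.X))
        = 0 := by
      intro k hk hne
      rw [Polynomial.eval_mul, Polynomial.eval_prod]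
      have hmem : i ∈ (range (d + 1)).erase k := Finset.mem_erase.mpr ⟨fun h => hne h.symm, hi⟩
      rw [Finset.prod_eq_zero hmem ?_, mul_zero]
      rw [Polynomial.eval_sub, Polynomial.eval_one, Polynomial.eval_mul, Polynomial.eval_C,
        Polynomial.eval_X, ← mul_pow, mul_inv_cancel₀ ww_ne, one_pow, sub_self]
    rw [Finset.sum_eq_single_of_mem i hi hother]
    rw [Polynomial.eval_mul, Polynomial.eval_C, Polynomial.eval_prod]
    have hsimp : ∀ j ∈ (range (d+1)).erase i,
        Polynomial.eval ((v:K)^i) (1 - Polynomial.C ((ww : K) ^ j) * Polynomial.X)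
          = 1 - (ww:K)^j * v^i := by
      intro j _
      rw [Polynomial.eval_sub, Polynomial.eval_one, Polynomial.eval_mul, Polynomial.eval_C,
        Polynomial.eval_X]
    rw [Finset.prod_congr rfl hsimp]
    have hsplit : (range (d+1)).erase i = range i ∪ Ico (i+1) (d+1) := by
      ext j
      simp only [Finset.mem_erase, Finset.mem_range, Finset.mem_union, Finset.mem_Ico]
      rw [Finset.mem_range] at hi
      omega
    have hdisj : Disjoint (range i) (Ico (i+1) (d+1)) := by
      rw [Finset.disjoint_left]
      intro j hj hj2
      rw [Finset.mem_range] at hj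
      rw [Finset.mem_Ico] at hj2
      omega
    rw [hsplit, Finset.prod_union hdisj]
    have h2 : ∏ j ∈ Ico (i+1) (d+1), ((1:K) - (ww:K)^j * v^i) = lphi (uu (d - i)) := by
      rw [Finset.prod_Ico_eq_prod_range, lphi_uu, show d + 1 - (i+1) = d - i from by omega]
      refine Finset.prod_congr rfl ?_
      intro j _
      congr 1
      rw [show i+1+j = i + (j+1) from by ring, pow_add, mul_comm ((ww:K)^i) ((ww:K)^(j+1)),
        mul_assoc, mul_comm ((ww:K)^i) ((v:K)^i), hvw i, mul_one]
    have hterm : ∀ j ∈ range i, (1 : K) - ww^(i-1-j) * v^i = (-v^(j+1)) * (1 - ww^(j+1)) := by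
      intro j hj
      rw [Finset.mem_range] at hj
      have hk' : (v : K)^i = v^(i-1-j) * v^(j+1) := by
        rw [← pow_add, show i-1-j + (j+1) = i from by omega]
      rw [hk']
      have e1 := hvw (i-1-j)
      have e2 := hvw (j+1)
      linear_combination (-(v:K)^(j+1)) * e1 - e2
    have h1 : ∏ j ∈ range i, ((1:K) - ww^j * v^i)
        = ((-1:K)^i * v^(∑ j ∈ range i, (j+1))) * lphi (uu i) := by
      calc ∏ j ∈ range i, ((1:K) - ww^j * v^i)
          = ∏ j ∈ range i, ((1:K) - ww^(i-1-j) * v^i) :=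
            (Finset.prod_range_reflect (fun j => (1:K) - ww^j * v^i) i).symm
        _ = ∏ j ∈ range i, ((-v^(j+1)) * ((1:K) - ww^(j+1))) := Finset.prod_congr rfl hterm
        _ = (∏ j ∈ range i, (-(v:K)^(j+1))) * ∏ j ∈ range i, ((1:K) - ww^(j+1)) :=
            Finset.prod_mul_distrib
        _ = _ := by
            rw [lphi_uu]
            congr 1
            have hneg : ∀ j ∈ range i, (-(v:K)^(j+1)) = (-1) * v^(j+1) := fun j _ => by ring
            rw [Finset.prod_congr rfl hneg, Finset.prod_mul_distrib, Finset.prod_const,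
              Finset.prod_pow_eq_pow_sum, Finset.card_range]
    rw [h1, h2, lphi_cc]
    set N := ∑ j ∈ range i, (j+1) with hNdef
    have hN2 : N * 2 = i * (i + 1) := by
      have hs : N = ∑ j ∈ range (i+1), j := by
        rw [hNdef, Finset.sum_range_succ' (fun j => j) i]
        simp
      rw [hs, Finset.sum_range_id_mul_two (i+1)]
      simp [Nat.mul_comm]
    have hyyN : (yy : K) ^ (i * (i+1)) = ww ^ N := by
      rw [ww, ← pow_mul, ← hN2, Nat.mul_comm N 2]
    rw [hyyN]
    have ha := lphi_uu_ne i
    have hb := lphi_uu_ne (d - i)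
    have hmm : ((-1:K)^i) * ((-1:K)^i) = 1 := by
      rw [← pow_add, ← two_mul, pow_mul]
      norm_num
    have hwv : (ww:K)^N * v^N = 1 := by rw [mul_comm]; exact hvw N
    field_simp
    have hxs : (ww:K)^N * ww⁻¹^N * (-1:K)^(i*2) = 1 := by
      rw [← hv, hwv, one_mul]; rw [pow_mul, pow_two]; exact hmm
    linear_combination hxs
  have hdegF : F.natDegree ≤ d := by
    rw [hF]
    refine Polynomial.natDegree_sum_le_of_forall_le _ _ ?_
    intro k hk
    refine le_trans (Polynomial.natDegree_mul_le) ?_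
    have hC : (Polynomial.C (lphi (cc d k))).natDegree = 0 := Polynomial.natDegree_C _
    rw [hC, zero_add]
    refine le_trans (Polynomial.natDegree_prod_le _ _) ?_
    have hb : ∀ j ∈ (range (d+1)).erase k,
        ((1 : Polynomial K) - Polynomial.C ((ww:K)^j) * Polynomial.X).natDegree ≤ 1 := by
      intro j _
      refine le_trans (Polynomial.natDegree_sub_le _ _) ?_
      refine max_le (by simp) ?_
      exact le_trans (Polynomial.natDegree_C_mul_le _ _) (by simp)
    refine le_trans (Finset.sum_le_card_nsmul _ _ 1 hb) ?_
    rw [Finset.card_erase_of_mem hk, Finset.card_range]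
    simp
  have hF1 : F = 1 := by
    have hzero : F - 1 = 0 := by
      apply Polynomial.eq_zero_of_degree_lt_of_eval_finset_eq_zero
        ((range (d+1)).image fun k => (v:K)^k)
      · have hcard : ((range (d+1)).image fun k => (v:K)^k).card = d + 1 := by
          rw [Finset.card_image_of_injOn, Finset.card_range]
          intro a ha b hb hab
          by_contra hne
          exact hvinj a b hne hab
        rw [hcard]
        have h1 : (F - 1).natDegree ≤ d := by
          refine le_trans (Polynomial.natDegree_sub_le _ _) ?_
          exact max_le hdegF (by simp)
        calc (F-1).degree ≤ ((F-1).natDegree : WithBot ℕ) := Polynomial.degree_le_natDegree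
          _ < ((d+1 : ℕ) : WithBot ℕ) := by exact_mod_cast Nat.lt_succ_of_le h1
      · intro x hx
        rw [Finset.mem_image] at hx
        obtain ⟨i, hi, rfl⟩ := hx
        rw [Polynomial.eval_sub, Polynomial.eval_one, heval i hi, sub_self]
    exact sub_eq_zero.mp hzero
  have hGF := hmap.trans hF1
  exact Polynomial.map_injective _ lphi_inj (hGF.trans (Polynomial.map_one _).symm)


end SpringerAux

open SpringerAux

/-- Springer's formula.  Taking the Sylvester–Cayley input as the definition, the
Poincaré series of invariants of the binary `d`-form is the series whose `n`-th
coefficient is the coefficient of `t^n z^{dn}` in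
`f_d(t,z²) = (1-z²)/∏_{j=0}^d (1 - t z^{2j})`, and it equals
`Σ_{0 ≤ k < d/2} φ_{d-2k}((-1)^k z^{k(k+1)}(1-z²)/((z²;z²)_k (z²;z²)_{d-k}))`. -/
theorem stmt8 (d : ℕ) (hd : 1 ≤ d) :
    (PowerSeries.mk fun n : ℕ =>
        MvPowerSeries.coeff (Finsupp.single 0 n + Finsupp.single 1 (d * n))
          ((1 - (MvPowerSeries.X 1 : MvPowerSeries (Fin 2) ℂ) ^ 2) *
            (∏ j ∈ range (d + 1),
              (1 - (MvPowerSeries.X 0 : MvPowerSeries (Fin 2) ℂ) *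
                (MvPowerSeries.X 1) ^ (2 * j)))⁻¹)) =
      ∑ k ∈ (range (d + 1)).filter fun k => 2 * k < d,
        phiOp (d - 2 * k)
          (((-1 : PowerSeries ℂ) ^ k * (PowerSeries.X : PowerSeries ℂ) ^ (k * (k + 1)) *
              (1 - PowerSeries.X ^ 2)) *
            ((∏ j ∈ range k, (1 - (PowerSeries.X : PowerSeries ℂ) ^ (2 * (j + 1)))) *
              ∏ j ∈ range (d - k),
                (1 - (PowerSeries.X : PowerSeries ℂ) ^ (2 * (j + 1))))⁻¹) := by
  classical
  set P : MvPowerSeries (Fin 2) ℂ := ∏ j ∈ range (d + 1),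
      (1 - (MvPowerSeries.X 0 : MvPowerSeries (Fin 2) ℂ) * (MvPowerSeries.X 1) ^ (2 * j))
    with hP
  set R : MvPowerSeries (Fin 2) ℂ := ∑ k ∈ range (d + 1), emb (cc d k) * Tk k with hR
  have hPR : R * P = 1 := by
    have hev := congrArg
      (Polynomial.eval₂RingHom emb (MvPowerSeries.X 0 : MvPowerSeries (Fin 2) ℂ))
      (lagrange_id d)
    rw [map_one, map_sum] at hev
    have hsummand : ∀ k ∈ range (d + 1),
        (Polynomial.eval₂RingHom emb (MvPowerSeries.X 0 : MvPowerSeries (Fin 2) ℂ))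
          (Polynomial.C (cc d k) * ∏ j ∈ (range (d + 1)).erase k,
            (1 - Polynomial.C ((PowerSeries.X : PowerSeries ℂ) ^ (2 * j)) * Polynomial.X))
        = emb (cc d k) * ∏ j ∈ (range (d + 1)).erase k,
            (1 - (MvPowerSeries.X 0 : MvPowerSeries (Fin 2) ℂ) * (MvPowerSeries.X 1) ^ (2 * j)) := by
      intro k _
      rw [map_mul, map_prod]
      congr 1
      · rw [Polynomial.coe_eval₂RingHom, Polynomial.eval₂_C]
      · refine Finset.prod_congr rfl ?_
        intro j _
        rw [map_sub, map_one, map_mul, Polynomial.coe_eval₂RingHom, Polynomial.eval₂_C,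
          Polynomial.eval₂_X, emb_X_pow, mul_comm]
    rw [Finset.sum_congr rfl hsummand] at hev
    rw [hR, Finset.sum_mul]
    rw [show (∑ k ∈ range (d + 1), emb (cc d k) * Tk k * P) =
        ∑ k ∈ range (d + 1), emb (cc d k) * ∏ j ∈ (range (d + 1)).erase k,
          (1 - (MvPowerSeries.X 0 : MvPowerSeries (Fin 2) ℂ) * (MvPowerSeries.X 1) ^ (2 * j))
        from ?_]
    · exact hev
    refine Finset.sum_congr rfl ?_
    intro k hk
    rw [hP, ← Finset.mul_prod_erase _ _ hk]
    calc emb (cc d k) * Tk k *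
          ((1 - (MvPowerSeries.X 0 : MvPowerSeries (Fin 2) ℂ) * (MvPowerSeries.X 1) ^ (2 * k)) *
            ∏ j ∈ (range (d + 1)).erase k,
              (1 - (MvPowerSeries.X 0 : MvPowerSeries (Fin 2) ℂ) * (MvPowerSeries.X 1) ^ (2 * j)))
        = emb (cc d k) * (∏ j ∈ (range (d + 1)).erase k,
              (1 - (MvPowerSeries.X 0 : MvPowerSeries (Fin 2) ℂ) * (MvPowerSeries.X 1) ^ (2 * j))) *
            ((1 - (MvPowerSeries.X 0 : MvPowerSeries (Fin 2) ℂ) * (MvPowerSeries.X 1) ^ (2 * k)) *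
              Tk k) := by ring
      _ = _ := by rw [geom k, mul_one]
  have hPconst : MvPowerSeries.constantCoeff P ≠ 0 := by
    rw [hP, map_prod]
    have : ∀ j ∈ range (d + 1), MvPowerSeries.constantCoeff
        (1 - (MvPowerSeries.X 0 : MvPowerSeries (Fin 2) ℂ) * (MvPowerSeries.X 1) ^ (2 * j))
        = 1 := by
      intro j _
      rw [map_sub, map_one, map_mul, MvPowerSeries.constantCoeff_X, zero_mul, sub_zero]
    rw [Finset.prod_congr rfl this, Finset.prod_const_one]
    exact one_ne_zero
  have hPinv : P⁻¹ = R := (MvPowerSeries.inv_eq_iff_mul_eq_one hPconst).mpr hPR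
  rw [hPinv]
  ext n
  rw [PowerSeries.coeff_mk, map_sum]
  have hgg : ∀ k, (1 - (MvPowerSeries.X 1 : MvPowerSeries (Fin 2) ℂ) ^ 2) *
      (emb (cc d k) * Tk k)
      = emb (((-1 : PowerSeries ℂ) ^ k * (PowerSeries.X : PowerSeries ℂ) ^ (k * (k + 1)) *
            (1 - PowerSeries.X ^ 2)) *
          ((∏ j ∈ range k, (1 - (PowerSeries.X : PowerSeries ℂ) ^ (2 * (j + 1)))) *
            ∏ j ∈ range (d - k),
              (1 - (PowerSeries.X : PowerSeries ℂ) ^ (2 * (j + 1))))⁻¹) * Tk k := by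
    intro k
    have h1 : (1 - (MvPowerSeries.X 1 : MvPowerSeries (Fin 2) ℂ) ^ 2)
        = emb (1 - PowerSeries.X ^ 2) := by
      rw [map_sub, map_one, emb_X_pow]
    have h2 : ((-1 : PowerSeries ℂ) ^ k * (PowerSeries.X : PowerSeries ℂ) ^ (k * (k + 1)) *
            (1 - PowerSeries.X ^ 2)) *
          ((∏ j ∈ range k, (1 - (PowerSeries.X : PowerSeries ℂ) ^ (2 * (j + 1)))) *
            ∏ j ∈ range (d - k),
              (1 - (PowerSeries.X : PowerSeries ℂ) ^ (2 * (j + 1))))⁻¹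
        = (1 - PowerSeries.X ^ 2) * cc d k := by
      rw [cc, uu, uu]
      ring
    rw [h2, h1, map_mul, mul_assoc, ← mul_assoc (emb (1 - PowerSeries.X ^ 2)), mul_assoc]
  rw [hR, Finset.mul_sum, Finset.sum_congr rfl fun k _ => hgg k, map_sum]
  set gg : ℕ → PowerSeries ℂ := fun k =>
    ((-1 : PowerSeries ℂ) ^ k * (PowerSeries.X : PowerSeries ℂ) ^ (k * (k + 1)) *
        (1 - PowerSeries.X ^ 2)) *
      ((∏ j ∈ range k, (1 - (PowerSeries.X : PowerSeries ℂ) ^ (2 * (j + 1)))) *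
        ∏ j ∈ range (d - k),
          (1 - (PowerSeries.X : PowerSeries ℂ) ^ (2 * (j + 1))))⁻¹ with hggdef
  have hcoeffk : ∀ k ∈ range (d + 1),
      MvPowerSeries.coeff (Finsupp.single 0 n + Finsupp.single 1 (d * n))
        (emb (gg k) * Tk k)
      = if 2 * k < d then PowerSeries.coeff ((d - 2 * k) * n) (gg k) else 0 := by
    intro k _
    rw [show (emb (gg k) : MvPowerSeries (Fin 2) ℂ) = embFun (gg k) from rfl,
      coeff_embFun_mul_Tk]
    by_cases h2 : 2 * k < d
    · rw [if_pos h2, if_pos (Nat.mul_le_mul_right n (by omega))]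
      congr 1
      rw [← Nat.sub_mul]
    · rw [if_neg h2]
      split
      next h3 =>
        have hk1 : 1 ≤ k := by omega
        have hdn : d * n ≤ 2 * k * n := Nat.mul_le_mul_right n (by omega)
        have h0 : d * n - 2 * k * n = 0 := by omega
        rw [h0]
        have hX0 : PowerSeries.constantCoeff
            ((PowerSeries.X : PowerSeries ℂ) ^ (k * (k + 1))) = 0 := by
          rw [map_pow, PowerSeries.constantCoeff_X,
            zero_pow (Nat.mul_ne_zero (by omega) (by omega))]
        rw [PowerSeries.coeff_zero_eq_constantCoeff, hggdef]
        simp only [map_mul, hX0, mul_zero, zero_mul]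
      next h3 => rfl
  rw [Finset.sum_congr rfl hcoeffk, ← Finset.sum_filter]
  refine Finset.sum_congr rfl ?_
  intro k _
  rw [phiOp, PowerSeries.coeff_mk]
end

section
/- Let d ≥ 1 and f_d(t,p,q) = b₃(p,q) / ∏_{k+l ≤ d, k,l ≥ 0} (1 - t p^k q^l) with b₃(p,q) = 1 + pq + q²/p − 2q − q². As a rational function of t over ℂ(p,q), the partial fraction decomposition is f_d(t,p,q) = Σ_{k+j ≤ d} R_{k,j}(p,q)/(1 - t p^k q^j), where R_{k,j}(p,q) = (-1)^k p^{k(k+1)/2} b₃(p,q) / ( [∏_{s=0, s≠j}^{d} (p^{-k} q^{s-j}; p)_{d+1-s}] · (p;p)_k · (p;p)_{d-k-j} ). -/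
open Finset

/-- Shortcut instance: `ℂ(p)(q)` is a field. -/
noncomputable instance : Field (RatFunc (RatFunc ℂ)) := inferInstance
/-- Shortcut instance: `ℂ(p)(q)(t)` is a field. -/
noncomputable instance : Field (RatFunc (RatFunc (RatFunc ℂ))) := inferInstance

/-- The variable `t` in the field `ℂ(p)(q)(t)`. -/
noncomputable def tv : RatFunc (RatFunc (RatFunc ℂ)) := RatFunc.X
/-- The variable `q` in the field `ℂ(p)(q)(t)`. -/
noncomputable def qv : RatFunc (RatFunc (RatFunc ℂ)) := RatFunc.C RatFunc.X
/-- The variable `p` in the field `ℂ(p)(q)(t)`. -/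
noncomputable def pv : RatFunc (RatFunc (RatFunc ℂ)) := RatFunc.C (RatFunc.C RatFunc.X)

/-- `b₃(p,q) = 1 + pq + q²/p − 2q − q²`. -/
noncomputable def b3 : RatFunc (RatFunc (RatFunc ℂ)) :=
  1 + pv * qv + qv ^ 2 / pv - 2 * qv - qv ^ 2

/-- The `q`-shifted factorial `(a;x)_n = ∏_{i=0}^{n-1} (1 - a x^i)`. -/
noncomputable def qp (a x : RatFunc (RatFunc (RatFunc ℂ))) (n : ℕ) :
    RatFunc (RatFunc (RatFunc ℂ)) := ∏ i ∈ range n, (1 - a * x ^ i)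

theorem key_id {L : Type*} [Field L] (A X u : L) (hA : A ≠ 0) (hX : X ≠ 0)
    (hAX : A ≠ X) (h1 : 1 - u * X ≠ 0) (h2 : 1 - u * A ≠ 0) :
    (1 - u * X)⁻¹ * (1 - u * A)⁻¹ =
      (1 - A / X)⁻¹ * (1 - u * X)⁻¹ + (1 - X / A)⁻¹ * (1 - u * A)⁻¹ := by
  have h3 : X - A ≠ 0 := sub_ne_zero.mpr (Ne.symm hAX)
  have h4 : A - X ≠ 0 := sub_ne_zero.mpr hAX
  have h5 : 1 - A / X = (X - A) / X := by field_simp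
  have h6 : 1 - X / A = (A - X) / A := by field_simp
  rw [h5, h6, inv_div, inv_div]
  rw [inv_eq_one_div, inv_eq_one_div]
  field_simp
  ring


theorem pf_lemma {L : Type*} [Field L] {ι : Type*} [DecidableEq ι] (S : Finset ι)
    (hS : S.Nonempty) (a : ι → L) :
    (∀ i ∈ S, a i ≠ 0) → (∀ i ∈ S, ∀ j ∈ S, a i = a j → i = j) →
    ∀ u : L, (∀ i ∈ S, 1 - u * a i ≠ 0) →
    (∏ i ∈ S, (1 - u * a i))⁻¹ =
      ∑ i ∈ S, (∏ j ∈ S.erase i, (1 - a j / a i))⁻¹ * (1 - u * a i)⁻¹ := by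
  induction hS using Finset.Nonempty.cons_induction with
  | singleton y => intro _ _ u _; simp
  | cons x s hx hs ih =>
    intro h0 hinj u hu
    simp only [cons_eq_insert] at *
    have hax : a x ≠ 0 := h0 x (mem_insert_self x s)
    have has : ∀ i ∈ s, a i ≠ 0 := fun i hi => h0 i (mem_insert_of_mem hi)
    have hne : ∀ i ∈ s, a i ≠ a x := by
      intro i hi h
      exact hx ((hinj i (mem_insert_of_mem hi) x (mem_insert_self x s) h) ▸ hi)
    have hinj' : ∀ i ∈ s, ∀ j ∈ s, a i = a j → i = j := fun i hi j hj =>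
      hinj i (mem_insert_of_mem hi) j (mem_insert_of_mem hj)
    have hux : 1 - u * a x ≠ 0 := hu x (mem_insert_self x s)
    have hus : ∀ i ∈ s, 1 - u * a i ≠ 0 := fun i hi => hu i (mem_insert_of_mem hi)
    have hiax : ∀ i ∈ s, 1 - a i / a x ≠ 0 := fun i hi =>
      sub_ne_zero.mpr (fun h => hne i hi ((div_eq_one_iff_eq hax).mp h.symm))
    have hxai : ∀ i ∈ s, 1 - a x / a i ≠ 0 := fun i hi =>
      sub_ne_zero.mpr (fun h =>
        hne i hi ((div_eq_one_iff_eq (has i hi)).mp h.symm).symm)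
    have ihu := ih has hinj' u hus
    have ihx : (∏ i ∈ s, (1 - a i / a x))⁻¹ =
        ∑ i ∈ s, (∏ j ∈ s.erase i, (1 - a j / a i))⁻¹ * (1 - a i / a x)⁻¹ := by
      have h2 := ih has hinj' (a x)⁻¹ (by
        intro i hi
        rw [inv_mul_eq_div]
        exact hiax i hi)
      simpa only [inv_mul_eq_div] using h2
    rw [prod_insert hx, sum_insert hx, mul_inv, ihu, erase_insert hx, ihx]
    have herase : ∀ i ∈ s, (insert x s).erase i = insert x (s.erase i) := by
      intro i hi
      exact Finset.erase_insert_of_ne (fun h => hx (h ▸ hi))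
    rw [mul_sum, sum_mul, ← Finset.sum_add_distrib]
    apply Finset.sum_congr rfl
    intro i hi
    rw [herase i hi, prod_insert (fun h => hx (mem_of_mem_erase h)), mul_inv]
    rcases eq_or_ne (∏ j ∈ s.erase i, (1 - a j / a i)) 0 with hP | hP
    · simp [hP]
    · have hk := key_id (a i) (a x) u (has i hi) hax (hne i hi) hux (hus i hi)
      calc (1 - u * a x)⁻¹ * ((∏ j ∈ s.erase i, (1 - a j / a i))⁻¹ * (1 - u * a i)⁻¹)
          = (∏ j ∈ s.erase i, (1 - a j / a i))⁻¹ * ((1 - u * a x)⁻¹ * (1 - u * a i)⁻¹) := by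
            ring
        _ = (∏ j ∈ s.erase i, (1 - a j / a i))⁻¹ *
              ((1 - a i / a x)⁻¹ * (1 - u * a x)⁻¹ + (1 - a x / a i)⁻¹ * (1 - u * a i)⁻¹) := by
            rw [hk]
        _ = (∏ j ∈ s.erase i, (1 - a j / a i))⁻¹ * (1 - a i / a x)⁻¹ * (1 - u * a x)⁻¹ +
              (1 - a x / a i)⁻¹ * (∏ j ∈ s.erase i, (1 - a j / a i))⁻¹ * (1 - u * a i)⁻¹ := by
            ring


theorem ratfunc_C_inj {K : Type*} [Field K] :
    Function.Injective (RatFunc.C : K →+* RatFunc K) :=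
  RingHom.injective _

theorem ratfunc_C_ne_zero {K : Type*} [Field K] {x : K} (hx : x ≠ 0) :
    (RatFunc.C x : RatFunc K) ≠ 0 :=
  (map_ne_zero_iff _ ratfunc_C_inj).mpr hx

theorem intDegree_X_pow {K : Type*} [Field K] (n : ℕ) :
    RatFunc.intDegree ((RatFunc.X : RatFunc K) ^ n) = n := by
  induction n with
  | zero => simp
  | succ m ih =>
    rw [pow_succ, RatFunc.intDegree_mul (pow_ne_zero m RatFunc.X_ne_zero) RatFunc.X_ne_zero,
      ih, RatFunc.intDegree_X]
    push_cast; ring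

theorem X_pow_inj {K : Type*} [Field K] {m n : ℕ}
    (h : (RatFunc.X : RatFunc K) ^ m = RatFunc.X ^ n) : m = n := by
  have := congrArg RatFunc.intDegree h
  rw [intDegree_X_pow, intDegree_X_pow] at this
  exact_mod_cast this

/-- the element `p^k q^l` at the middle level -/
noncomputable def c2 (k l : ℕ) : RatFunc (RatFunc ℂ) :=
  (RatFunc.C (RatFunc.X : RatFunc ℂ)) ^ k * RatFunc.X ^ l

theorem c2_ne_zero (k l : ℕ) : c2 k l ≠ 0 :=
  mul_ne_zero (pow_ne_zero _ (ratfunc_C_ne_zero RatFunc.X_ne_zero))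
    (pow_ne_zero _ RatFunc.X_ne_zero)

theorem pq_eq (k l : ℕ) : pv ^ k * qv ^ l = RatFunc.C (c2 k l) := by
  rw [pv, qv, c2, map_mul, map_pow, map_pow]

theorem c2_inj {k l k' l' : ℕ} (h : c2 k l = c2 k' l') : k = k' ∧ l = l' := by
  have hCX : ((RatFunc.C (RatFunc.X : RatFunc ℂ)) : RatFunc (RatFunc ℂ)) ≠ 0 :=
    ratfunc_C_ne_zero RatFunc.X_ne_zero
  have hl : l = l' := by
    have := congrArg RatFunc.intDegree h
    rw [c2, c2, RatFunc.intDegree_mul (pow_ne_zero _ hCX) (pow_ne_zero _ RatFunc.X_ne_zero),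
      RatFunc.intDegree_mul (pow_ne_zero _ hCX) (pow_ne_zero _ RatFunc.X_ne_zero),
      ← map_pow, ← map_pow, RatFunc.intDegree_C, RatFunc.intDegree_C,
      intDegree_X_pow, intDegree_X_pow, zero_add, zero_add] at this
    exact_mod_cast this
  refine ⟨?_, hl⟩
  subst hl
  rw [c2, c2] at h
  have h2 := mul_right_cancel₀ (pow_ne_zero _ (RatFunc.X_ne_zero)) h
  rw [← map_pow, ← map_pow] at h2
  exact X_pow_inj (ratfunc_C_inj h2)

theorem pq_ne_zero (k l : ℕ) : pv ^ k * qv ^ l ≠ 0 := by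
  rw [pq_eq]; exact ratfunc_C_ne_zero (c2_ne_zero k l)

theorem pq_inj {k l k' l' : ℕ} (h : pv ^ k * qv ^ l = pv ^ k' * qv ^ l') :
    k = k' ∧ l = l' := by
  rw [pq_eq, pq_eq] at h
  exact c2_inj (ratfunc_C_inj h)

theorem one_sub_t_pq_ne_zero (k l : ℕ) : 1 - tv * (pv ^ k * qv ^ l) ≠ 0 := by
  rw [sub_ne_zero]
  intro h
  have hne : tv * (pv ^ k * qv ^ l) ≠ 0 :=
    mul_ne_zero (by rw [tv]; exact RatFunc.X_ne_zero) (pq_ne_zero k l)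
  have := congrArg RatFunc.intDegree h.symm
  rw [pq_eq, tv, RatFunc.intDegree_mul RatFunc.X_ne_zero
      (ratfunc_C_ne_zero (c2_ne_zero k l)), RatFunc.intDegree_X, RatFunc.intDegree_C,
    RatFunc.intDegree_one] at this
  omega

theorem pow_div_pow_eq_zpow {K : Type*} [Field K] {x : K} (hx : x ≠ 0) (m n : ℕ) :
    x ^ m / x ^ n = x ^ ((m : ℤ) - (n : ℤ)) := by
  rw [zpow_sub₀ hx, zpow_natCast, zpow_natCast]

theorem pv_ne_zero : pv ≠ 0 := ratfunc_C_ne_zero (ratfunc_C_ne_zero RatFunc.X_ne_zero)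
theorem qv_ne_zero : qv ≠ 0 := ratfunc_C_ne_zero RatFunc.X_ne_zero

theorem claim2 (k j s n : ℕ) :
    ∏ k' ∈ range n, (1 - pv ^ ((k' : ℤ) - (k : ℤ)) * qv ^ ((s : ℤ) - (j : ℤ))) =
      qp (pv ^ (-(k : ℤ)) * qv ^ ((s : ℤ) - (j : ℤ))) pv n := by
  rw [qp]
  refine prod_congr rfl fun i _ => ?_
  congr 1
  have h : ((i : ℤ) - (k : ℤ)) = -(k : ℤ) + i := by ring
  rw [h, zpow_add₀ pv_ne_zero, zpow_natCast]
  ring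

theorem claim3 (d k j : ℕ) (hkj : k + j ≤ d) :
    ∏ k' ∈ (range (d + 1 - j)).erase k, (1 - pv ^ ((k' : ℤ) - (k : ℤ))) =
      (-1 : RatFunc (RatFunc (RatFunc ℂ))) ^ k * (pv ^ (k * (k + 1) / 2))⁻¹ *
        (qp pv pv k * qp pv pv (d - k - j)) := by
  have hsplit : (range (d + 1 - j)).erase k = range k ∪ Ico (k + 1) (d + 1 - j) := by
    ext m; simp only [mem_erase, mem_range, mem_union, mem_Ico]; omega
  have hdisj : Disjoint (range k) (Ico (k + 1) (d + 1 - j)) := by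
    simp only [disjoint_left, mem_range, mem_Ico]; omega
  rw [hsplit, prod_union hdisj]
  have hP1 : ∏ k' ∈ range k, (1 - pv ^ ((k' : ℤ) - (k : ℤ))) =
      (-1 : RatFunc (RatFunc (RatFunc ℂ))) ^ k * (pv ^ (k * (k + 1) / 2))⁻¹ * qp pv pv k := by
    rw [← prod_range_reflect]
    have hterm : ∀ i ∈ range k, (1 - pv ^ (((k - 1 - i : ℕ) : ℤ) - (k : ℤ))) =
        (-1) * (pv⁻¹) ^ (i + 1) * (1 - pv * pv ^ i) := by
      intro i hi
      rw [mem_range] at hi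
      have h1 : ((k - 1 - i : ℕ) : ℤ) - (k : ℤ) = -((i : ℤ) + 1) := by
        push_cast [Nat.cast_sub (by omega : i ≤ k - 1), Nat.cast_sub (by omega : 1 ≤ k)]
        ring
      rw [h1]
      have h2 : pv ^ (-((i : ℤ) + 1)) = (pv⁻¹) ^ (i + 1) := by
        rw [show -((i : ℤ) + 1) = -(((i + 1 : ℕ) : ℤ)) by push_cast; ring, zpow_neg,
          zpow_natCast, inv_pow]
      rw [h2]
      have h3 : (pv⁻¹ : RatFunc (RatFunc (RatFunc ℂ))) ^ (i + 1) * pv ^ (i + 1) = 1 := by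
        rw [← mul_pow, inv_mul_cancel₀ pv_ne_zero, one_pow]
      have h4 : pv * pv ^ i = pv ^ (i + 1) := by ring
      calc (1 : RatFunc (RatFunc (RatFunc ℂ))) - pv⁻¹ ^ (i + 1)
          = -1 * pv⁻¹ ^ (i+1) * (1 - pv ^ (i+1)) + (1 - pv⁻¹ ^ (i + 1) * pv ^ (i+1)) := by ring
        _ = -1 * pv⁻¹ ^ (i+1) * (1 - pv ^ (i+1)) := by rw [h3]; ring
        _ = -1 * pv⁻¹ ^ (i + 1) * (1 - pv * pv ^ i) := by rw [h4]
    rw [prod_congr rfl hterm]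
    rw [show (fun i => (-1) * (pv⁻¹) ^ (i + 1) * (1 - pv * pv ^ i)) =
      (fun i => ((-1) * (pv⁻¹) ^ (i + 1)) * (1 - pv * pv ^ i)) from rfl]
    rw [prod_mul_distrib, prod_mul_distrib, prod_const, Finset.prod_pow_eq_pow_sum]
    have hsum : ∑ i ∈ range k, (i + 1) = k * (k + 1) / 2 := by
      rw [Finset.sum_add_distrib, Finset.sum_range_id, Finset.sum_const, card_range,
        smul_eq_mul, mul_one]
      have hmul : k * (k + 1) = k * (k - 1) + 2 * k := by
        rcases k with _ | n
        · rfl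
        · simp only [Nat.succ_sub_one]
          ring
      omega
    rw [hsum, inv_pow, qp, card_range]
  have hP2 : ∏ k' ∈ Ico (k + 1) (d + 1 - j), (1 - pv ^ ((k' : ℤ) - (k : ℤ))) =
      qp pv pv (d - k - j) := by
    rw [Finset.prod_Ico_eq_prod_range]
    have hn : d + 1 - j - (k + 1) = d - k - j := by omega
    rw [hn, qp]
    refine prod_congr rfl fun m _ => ?_
    congr 1
    have h5 : ((k + 1 + m : ℕ) : ℤ) - (k : ℤ) = ((m + 1 : ℕ) : ℤ) := by push_cast; ring
    rw [h5, zpow_natCast]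
    ring
  rw [hP1, hP2]
  ring

theorem regroup (d k j : ℕ) (hkj : k + j ≤ d) :
    ∏ kl ∈ (((range (d + 1)) ×ˢ range (d + 1)).filter (fun kl => kl.1 + kl.2 ≤ d)).erase (k, j),
      (1 - pv ^ ((kl.1 : ℤ) - (k : ℤ)) * qv ^ ((kl.2 : ℤ) - (j : ℤ))) =
    (-1) ^ k * (pv ^ (k * (k + 1) / 2))⁻¹ *
      ((∏ s ∈ (range (d + 1)).erase j,
          qp (pv ^ (-(k : ℤ)) * qv ^ ((s : ℤ) - (j : ℤ))) pv (d + 1 - s)) *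
        qp pv pv k * qp pv pv (d - k - j)) := by
  classical
  have hstep1 : ∏ kl ∈ (((range (d + 1)) ×ˢ range (d + 1)).filter
        (fun kl => kl.1 + kl.2 ≤ d)).erase (k, j),
      (1 - pv ^ ((kl.1 : ℤ) - (k : ℤ)) * qv ^ ((kl.2 : ℤ) - (j : ℤ))) =
      ∏ s ∈ range (d + 1), ∏ k' ∈ (if s = j then (range (d + 1 - j)).erase k
          else range (d + 1 - s)),
        (1 - pv ^ ((k' : ℤ) - (k : ℤ)) * qv ^ ((s : ℤ) - (j : ℤ))) := by
    rw [Finset.prod_sigma' (range (d + 1))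
      (fun s => if s = j then (range (d + 1 - j)).erase k else range (d + 1 - s))
      (fun s k' => 1 - pv ^ ((k' : ℤ) - (k : ℤ)) * qv ^ ((s : ℤ) - (j : ℤ)))]
    apply Finset.prod_nbij' (fun x => ⟨x.2, x.1⟩) (fun y => (y.2, y.1))
    · intro x hx
      simp only [mem_erase, mem_filter, mem_product, mem_range, Ne, Prod.ext_iff] at hx
      simp only [mem_sigma, mem_range]
      refine ⟨by omega, ?_⟩
      split_ifs with h
      · simp only [mem_erase, mem_range]; omega
      · simp only [mem_range]; omega
    · intro y hy
      simp only [mem_sigma, mem_range] at hy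
      obtain ⟨h1, h2⟩ := hy
      simp only [mem_erase, mem_filter, mem_product, mem_range, Ne, Prod.ext_iff]
      by_cases h : y.1 = j
      · rw [if_pos h] at h2
        simp only [mem_erase, mem_range] at h2
        omega
      · rw [if_neg h] at h2
        simp only [mem_range] at h2
        omega
    · intro x _; rfl
    · intro y _; rfl
    · intro x _; rfl
  rw [hstep1, ← Finset.mul_prod_erase _ _ (mem_range.mpr (by omega : j < d + 1))]
  rw [if_pos rfl]
  have hgj : ∏ k' ∈ (range (d + 1 - j)).erase k,
      (1 - pv ^ ((k' : ℤ) - (k : ℤ)) * qv ^ ((j : ℤ) - (j : ℤ))) =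
      (-1) ^ k * (pv ^ (k * (k + 1) / 2))⁻¹ * (qp pv pv k * qp pv pv (d - k - j)) := by
    rw [← claim3 d k j hkj]
    refine prod_congr rfl fun i _ => ?_
    rw [sub_self, zpow_zero, mul_one]
  rw [hgj]
  have hrest : ∏ s ∈ (range (d + 1)).erase j,
      ∏ k' ∈ (if s = j then (range (d + 1 - j)).erase k else range (d + 1 - s)),
        (1 - pv ^ ((k' : ℤ) - (k : ℤ)) * qv ^ ((s : ℤ) - (j : ℤ))) =
      ∏ s ∈ (range (d + 1)).erase j,
        qp (pv ^ (-(k : ℤ)) * qv ^ ((s : ℤ) - (j : ℤ))) pv (d + 1 - s) := by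
    refine prod_congr rfl fun s hs => ?_
    rw [if_neg (ne_of_mem_erase hs), claim2]
  rw [hrest]
  ring

/-- Partial fraction decomposition of
`f_d(t,p,q) = b₃(p,q)/∏_{k+l≤d} (1 - t p^k q^l)` as a rational function of `t`:
`f_d = Σ_{k+j≤d} R_{k,j}(p,q)/(1 - t p^k q^j)` with
`R_{k,j} = (-1)^k p^{k(k+1)/2} b₃ / ((∏_{s≠j} (p^{-k}q^{s-j};p)_{d+1-s}) (p;p)_k (p;p)_{d-k-j})`. -/
theorem stmt11 (d : ℕ) (hd : 1 ≤ d) :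
    b3 / ∏ kl ∈ ((range (d + 1)) ×ˢ range (d + 1)).filter (fun kl => kl.1 + kl.2 ≤ d),
          (1 - tv * pv ^ kl.1 * qv ^ kl.2) =
      ∑ kj ∈ ((range (d + 1)) ×ˢ range (d + 1)).filter (fun kj => kj.1 + kj.2 ≤ d),
        ((-1) ^ kj.1 * pv ^ (kj.1 * (kj.1 + 1) / 2) * b3 /
            ((∏ s ∈ (range (d + 1)).erase kj.2,
                qp (pv ^ (-(kj.1 : ℤ)) * qv ^ ((s : ℤ) - (kj.2 : ℤ))) pv (d + 1 - s)) *
              qp pv pv kj.1 * qp pv pv (d - kj.1 - kj.2))) /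
          (1 - tv * pv ^ kj.1 * qv ^ kj.2) := by
  classical
  set S := ((range (d + 1)) ×ˢ range (d + 1)).filter (fun kl => kl.1 + kl.2 ≤ d) with hSdef
  have hS : S.Nonempty := ⟨(0, 0), by simp [hSdef]⟩
  have h0 : ∀ kl ∈ S, pv ^ kl.1 * qv ^ kl.2 ≠ 0 := fun kl _ => pq_ne_zero _ _
  have hinj : ∀ i ∈ S, ∀ j ∈ S, pv ^ i.1 * qv ^ i.2 = pv ^ j.1 * qv ^ j.2 → i = j := by
    intro i _ j _ h
    obtain ⟨h1, h2⟩ := pq_inj h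
    exact Prod.ext h1 h2
  have hu : ∀ kl ∈ S, (1 : RatFunc (RatFunc (RatFunc ℂ))) - tv * (pv ^ kl.1 * qv ^ kl.2) ≠ 0 :=
    fun kl _ => one_sub_t_pq_ne_zero kl.1 kl.2
  rw [div_eq_mul_inv]
  rw [show ∏ kl ∈ S, (1 - tv * pv ^ kl.1 * qv ^ kl.2) =
      ∏ kl ∈ S, (1 - tv * (pv ^ kl.1 * qv ^ kl.2)) from
    prod_congr rfl (fun kl _ => by rw [mul_assoc])]
  rw [pf_lemma S hS (fun kl => pv ^ kl.1 * qv ^ kl.2) h0 hinj tv hu, mul_sum]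
  refine sum_congr rfl fun kj hkj => ?_
  obtain ⟨k, j⟩ := kj
  have hkjd : k + j ≤ d := by
    simp only [hSdef, mem_filter] at hkj
    exact hkj.2
  have hE : ∏ x ∈ S.erase (k, j),
      (1 - (pv ^ x.1 * qv ^ x.2) / (pv ^ k * qv ^ j)) =
      ∏ x ∈ S.erase (k, j),
        (1 - pv ^ ((x.1 : ℤ) - (k : ℤ)) * qv ^ ((x.2 : ℤ) - (j : ℤ))) := by
    refine prod_congr rfl fun x _ => ?_
    rw [← div_mul_div_comm, pow_div_pow_eq_zpow pv_ne_zero, pow_div_pow_eq_zpow qv_ne_zero]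
  rw [hE, hSdef, regroup d k j hkjd]
  have hneg : ((-1 : RatFunc (RatFunc (RatFunc ℂ))) ^ k)⁻¹ = (-1) ^ k := by
    rw [← inv_pow, inv_neg, inv_one]
  rw [div_eq_mul_inv, div_eq_mul_inv, mul_inv, mul_inv, inv_inv, hneg, ← mul_assoc tv]
  ring
end
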